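/- Every family of sets {X_j}_{j∈J} with |X_j| ≤ ℓ for all j ∈ J and |J| ≥ ℓ!·p^(ℓ+1) contains a Δ-system K with |K| = p, where a Δ-system is a collection of sets such that any two distinct sets in the collection have the same pairwise intersection. -/

import Mathlib

open scoped Classical

/-- Δ-system (sunflower) lemma: every family of sets of size at most `ℓ` indexed by a
set of size at least `ℓ! · p^(ℓ+1)` contains a Δ-system of size `p`: a subfamily in
which any two distinct members have the same pairwise intersection. -/
theorem delta_system_lemma {ι α : Type} [DecidableEq α]
    (J : Finset ι) (X : ι → Finset α) (ℓ p : ℕ)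
    (hX : ∀ j ∈ J, (X j).card ≤ ℓ)
    (hJ : ℓ.factorial * p ^ (ℓ + 1) ≤ J.card) :
    ∃ K ⊆ J, K.card = p ∧
      ∃ D : Finset α, ∀ i ∈ K, ∀ j ∈ K, i ≠ j → X i ∩ X j = D := by
  induction ℓ generalizing J X with
  | zero =>
    simp only [Nat.factorial_zero, one_mul, zero_add, pow_one] at hJ
    obtain ⟨K, hKJ, hKcard⟩ := Finset.exists_subset_card_eq hJ
    refine ⟨K, hKJ, hKcard, ∅, fun i hi j hj hij => ?_⟩
    have : X i = ∅ := Finset.card_eq_zero.mp (Nat.le_zero.mp (hX i (hKJ hi)))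
    simp [this]
  | succ ℓ IH =>
    rcases Nat.eq_zero_or_pos p with rfl | hp
    · exact ⟨∅, by simp, by simp, ∅, by simp⟩
    set N := ℓ.factorial * p ^ (ℓ + 1) with hN
    have hN1 : 0 < N := by positivity
    have hpN : p ≤ N := by
      calc p = 1 * p ^ 1 := by ring
        _ ≤ ℓ.factorial * p ^ (ℓ + 1) :=
          Nat.mul_le_mul ℓ.factorial_pos (Nat.pow_le_pow_right hp (by omega))
    -- maximal pairwise disjoint subfamily
    set S := J.powerset.filter
      (fun M => ∀ i ∈ M, ∀ j ∈ M, i ≠ j → X i ∩ X j = ∅) with hS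
    have hSne : S.Nonempty := ⟨∅, by simp [hS]⟩
    obtain ⟨M, hMS, hMmax⟩ := S.exists_max_image Finset.card hSne
    simp only [hS, Finset.mem_filter, Finset.mem_powerset] at hMS
    obtain ⟨hMJ, hMdisj⟩ := hMS
    by_cases hpm : p ≤ M.card
    · obtain ⟨K, hKM, hKcard⟩ := Finset.exists_subset_card_eq hpm
      exact ⟨K, hKM.trans hMJ, hKcard, ∅,
        fun i hi j hj hij => hMdisj i (hKM hi) j (hKM hj) hij⟩
    push_neg at hpm
    set Y := M.biUnion X with hY
    set T := fun a => (J \ M).filter (fun j => a ∈ X j) with hT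
    have hcover : ∀ j ∈ J \ M, ∃ a ∈ Y, j ∈ T a := by
      intro j hj
      have hjJ := (Finset.mem_sdiff.mp hj).1
      have hjM := (Finset.mem_sdiff.mp hj).2
      have hnot : ¬ (insert j M ∈ S) := by
        intro hmem
        have := hMmax _ hmem
        rw [Finset.card_insert_of_notMem hjM] at this
        omega
      simp only [hS, Finset.mem_filter, Finset.mem_powerset] at hnot
      push_neg at hnot
      obtain ⟨i, hi, k, hk, hik, hne⟩ := hnot (Finset.insert_subset hjJ hMJ)
      obtain ⟨a, ha⟩ := id hne
      rw [Finset.mem_inter] at ha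
      rcases Finset.mem_insert.mp hi with rfl | hiM
      · rcases Finset.mem_insert.mp hk with rfl | hkM
        · exact absurd rfl hik
        · refine ⟨a, Finset.mem_biUnion.mpr ⟨k, hkM, ha.2⟩, ?_⟩
          simp only [hT, Finset.mem_filter]
          exact ⟨hj, ha.1⟩
      · rcases Finset.mem_insert.mp hk with rfl | hkM
        · refine ⟨a, Finset.mem_biUnion.mpr ⟨i, hiM, ha.1⟩, ?_⟩
          simp only [hT, Finset.mem_filter]
          exact ⟨hj, ha.2⟩
        · exact absurd (hMdisj i hiM k hkM hik) (Finset.nonempty_iff_ne_empty.mp hne)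
    have hpig : ∃ a ∈ Y, N ≤ (T a).card := by
      by_contra hcon
      push_neg at hcon
      have hsub : J \ M ⊆ Y.biUnion T := by
        intro j hj
        obtain ⟨a, haY, hja⟩ := hcover j hj
        exact Finset.mem_biUnion.mpr ⟨a, haY, hja⟩
      have h1 : (J \ M).card ≤ Y.card * (N - 1) := by
        calc (J \ M).card ≤ (Y.biUnion T).card := Finset.card_le_card hsub
          _ ≤ ∑ a ∈ Y, (T a).card := Finset.card_biUnion_le
          _ ≤ Y.card * (N - 1) := by
              have := Finset.sum_le_card_nsmul Y (fun a => (T a).card) (N - 1)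
                (fun a haY => Nat.le_sub_one_of_lt (hcon a haY))
              simpa [smul_eq_mul] using this
      have hYcard : Y.card ≤ (ℓ + 1) * M.card := by
        calc Y.card ≤ ∑ i ∈ M, (X i).card := Finset.card_biUnion_le
          _ ≤ M.card * (ℓ + 1) := by
              have := Finset.sum_le_card_nsmul M (fun i => (X i).card) (ℓ + 1)
                (fun i hiM => hX i (hMJ hiM))
              simpa [smul_eq_mul] using this
          _ = (ℓ + 1) * M.card := by ring
      have hcards : (J \ M).card + M.card = J.card :=
        Finset.card_sdiff_add_card_eq_card hMJ
      have hJbig : (ℓ + 1) * N * p ≤ J.card := by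
        calc (ℓ + 1) * N * p = (ℓ + 1).factorial * p ^ (ℓ + 1 + 1) := by
              rw [hN, Nat.factorial_succ]; ring
          _ ≤ J.card := hJ
      obtain ⟨N', hN'⟩ : ∃ N', N = N' + 1 := ⟨N - 1, by omega⟩
      have hm1 : M.card + 1 ≤ p := hpm
      have key : J.card ≤ (ℓ + 1) * M.card * N' + M.card := by
        have : (J \ M).card ≤ (ℓ + 1) * M.card * N' := by
          calc (J \ M).card ≤ Y.card * (N - 1) := h1
            _ = Y.card * N' := by rw [hN']; rfl
            _ ≤ (ℓ + 1) * M.card * N' := Nat.mul_le_mul_right _ hYcard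
        omega
      have hlp : p ≤ (ℓ + 1) * p := Nat.le_mul_of_pos_left p (by omega)
      have hstep : (ℓ + 1) * N' * (M.card + 1) ≤ (ℓ + 1) * N' * p :=
        Nat.mul_le_mul_left _ hm1
      rw [hN'] at hJbig
      nlinarith [hstep, hlp, key, hJbig, hm1]
    obtain ⟨a, haY, haN⟩ := hpig
    have hTJ : T a ⊆ J := by
      intro j hj
      exact (Finset.mem_sdiff.mp (Finset.mem_of_mem_filter j hj)).1
    have hX' : ∀ j ∈ T a, (X j \ {a}).card ≤ ℓ := by
      intro j hj
      have hja : a ∈ X j := (Finset.mem_filter.mp hj).2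
      have h1 := hX j (hTJ hj)
      have h2 := Finset.card_sdiff_of_subset (Finset.singleton_subset_iff.mpr hja)
      simp only [Finset.card_singleton] at h2
      omega
    obtain ⟨K, hKT, hKcard, D, hD⟩ := IH (T a) (fun j => X j \ {a}) hX' haN
    refine ⟨K, fun k hk => hTJ (hKT hk), hKcard, insert a D, ?_⟩
    intro i hi j hj hij
    have hai : a ∈ X i := (Finset.mem_filter.mp (hKT hi)).2
    have haj : a ∈ X j := (Finset.mem_filter.mp (hKT hj)).2
    have hd := hD i hi j hj hij
    ext x
    simp only [Finset.mem_inter, Finset.mem_insert]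
    constructor
    · rintro ⟨hxi, hxj⟩
      by_cases hxa : x = a
      · exact Or.inl hxa
      · right; rw [← hd]; simp [hxi, hxj, hxa]
    · rintro (rfl | hxD)
      · exact ⟨hai, haj⟩
      · rw [← hd] at hxD
        simp only [Finset.mem_inter, Finset.mem_sdiff] at hxD
        exact ⟨hxD.1.1, hxD.2.1⟩
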